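/- Let $n \ge 3$, $2 \le k \le n-1$, and suppose $a_1 = a_2 = \cdots = a_n = c > 0$ with $\sigma_k(a) = 1$. Then $c = \binom{n}{k}^{-1/k}$, and for this $a$, the function $\overline\omega_k(s) = \int_1^s (1 + \alpha t^{-n/2})^{1/k} dt$ (for any $\alpha > 0$, $s > 0$) satisfies the ODE $(\omega'(s))^k + \frac{2ks}{n}\,\omega''(s)(\omega'(s))^{k-1} = 1$ for all $s > 0$; consequently $u(x) = \overline\omega_k\left(\frac{c}{2}|x|^2\right)$ satisfies $\sigma_k(\lambda(D^2 u)) = 1$ in $\mathbb{R}^n \setminus \{0\}$. -/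

import Mathlib

open Finset Matrix

/-- The `k`-th elementary symmetric function of the variables `a i` for `i ∈ s`. -/
noncomputable def esym {n : ℕ} (s : Finset (Fin n)) (k : ℕ) (a : Fin n → ℝ) : ℝ :=
  ∑ T ∈ s.powersetCard k, ∏ i ∈ T, a i

/-- The Hessian matrix of `u : ℝⁿ → ℝ` at `x`. -/
noncomputable def hess {n : ℕ} (u : (Fin n → ℝ) → ℝ) (x : Fin n → ℝ) :
    Matrix (Fin n) (Fin n) ℝ :=
  fun i j => fderiv ℝ (fun y => fderiv ℝ u y (Pi.single j 1)) x (Pi.single i 1)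

section aux

open Polynomial

lemma aux_det (m : ℕ) (hm : 2 ≤ m) (r b : ℝ) (x : Fin m → ℝ) :
    det (r • (1 : Matrix (Fin m) (Fin m) ℝ) + b • vecMulVec x x)
      = r ^ (m - 1) * (r + b * ∑ i, x i ^ 2) := by
  rcases eq_or_ne r 0 with hr | hr
  · subst hr
    simp only [zero_smul, zero_add]
    have h1 : (b • vecMulVec x x : Matrix (Fin m) (Fin m) ℝ)
        = Matrix.of fun i j => (b * x i) * (Matrix.of fun _ j => x j) i j := by
      ext i j; simp [vecMulVec, mul_assoc]
    rw [h1, Matrix.det_mul_column]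
    have h2 : det (Matrix.of fun _ j : Fin m => x j) = 0 := by
      apply Matrix.det_zero_of_row_eq (i := ⟨0, by omega⟩) (j := ⟨1, by omega⟩)
      · simp [Fin.ext_iff]
      · rfl
    rw [h2, mul_zero]
    rw [zero_pow (by omega), zero_mul]
  · have key : r • (1 : Matrix (Fin m) (Fin m) ℝ) + b • vecMulVec x x
        = r • ((1 : Matrix (Fin m) (Fin m) ℝ) + Matrix.replicateCol Unit ((b/r) • x) * Matrix.replicateRow Unit x) := by
      rw [smul_add]
      congr 1
      rw [← Matrix.vecMulVec_eq]
      ext i j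
      simp [vecMulVec]
      field_simp
    rw [key, Matrix.det_smul, Matrix.det_one_add_replicateCol_mul_replicateRow]
    have : x ⬝ᵥ (b / r) • x = (b/r) * ∑ i, x i ^ 2 := by
      simp [dotProduct, Finset.mul_sum]
      congr 1; ext i; ring
    rw [this]
    rw [Fintype.card_fin]
    have hm1 : r ^ m = r ^ (m-1) * r := by rw [← pow_succ]; congr 1; omega
    rw [hm1]
    field_simp

lemma aux_eig {m : ℕ} (A : Matrix (Fin m) (Fin m) ℝ) (hA : A.IsHermitian) (t : ℝ) :
    det (t • (1 : Matrix (Fin m) (Fin m) ℝ) - A) = ∏ i, (t - hA.eigenvalues i) := by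
  have hU := hA.eigenvectorUnitary.2
  set U : Matrix (Fin m) (Fin m) ℝ := (hA.eigenvectorUnitary : Matrix (Fin m) (Fin m) ℝ) with hUdef
  have h1 : star U * (t • (1 : Matrix (Fin m) (Fin m) ℝ) - A) * U
      = t • (1 : Matrix (Fin m) (Fin m) ℝ) - diagonal hA.eigenvalues := by
    rw [Matrix.mul_sub, Matrix.sub_mul]
    have h2 : star U * (t • (1 : Matrix (Fin m) (Fin m) ℝ)) * U = t • 1 := by
      rw [Matrix.mul_smul, Matrix.mul_one, Matrix.smul_mul]
      congr 1
      exact (Matrix.mem_unitaryGroup_iff'.mp hA.eigenvectorUnitary.2)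
    rw [h2]
    congr 1
    have := hA.conjStarAlgAut_star_eigenvectorUnitary
    rw [Unitary.conjStarAlgAut_star_apply] at this
    exact this
  have hdet : det (star U * (t • (1 : Matrix (Fin m) (Fin m) ℝ) - A) * U)
      = det (t • (1 : Matrix (Fin m) (Fin m) ℝ) - A) := by
    rw [Matrix.det_mul, Matrix.det_mul, mul_comm, ← mul_assoc, ← Matrix.det_mul,
      Matrix.mem_unitaryGroup_iff.mp hA.eigenvectorUnitary.2, Matrix.det_one, one_mul]
  rw [← hdet, h1]
  have : t • (1 : Matrix (Fin m) (Fin m) ℝ) - diagonal hA.eigenvalues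
      = diagonal (fun i => t - hA.eigenvalues i) := by
    ext i j
    rcases eq_or_ne i j with h | h <;>
      simp [Matrix.sub_apply, Matrix.smul_apply, Matrix.one_apply, Matrix.diagonal_apply, h]
  rw [this, Matrix.det_diagonal]

lemma aux_vieta {m : ℕ} (f g : Fin m → ℝ)
    (h : ∀ t : ℝ, ∏ i, (t - f i) = ∏ i, (t - g i)) (k : ℕ) (hk : k ≤ m) :
    esym Finset.univ k f = esym Finset.univ k g := by
  have hpoly : (∏ i, (X - C (f i)) : ℝ[X]) = ∏ i, (X - C (g i)) := by
    apply Polynomial.funext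
    intro t
    rw [Polynomial.eval_prod, Polynomial.eval_prod]
    simpa using h t
  have hcard : ∀ h' : Fin m → ℝ, Multiset.card (Finset.univ.val.map h') = m := by
    intro h'; simp
  have hle : m - k ≤ Multiset.card (Finset.univ.val.map f) := by rw [hcard]; omega
  have hle' : m - k ≤ Multiset.card (Finset.univ.val.map g) := by rw [hcard]; omega
  have hv1 := Multiset.prod_X_sub_C_coeff (Finset.univ.val.map f) hle
  have hv2 := Multiset.prod_X_sub_C_coeff (Finset.univ.val.map g) hle'
  rw [hcard] at hv1 hv2
  have hmk : m - (m - k) = k := by omega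
  rw [hmk] at hv1 hv2
  have hprod1 : ((Finset.univ.val.map f).map fun t => X - C t).prod = ∏ i, (X - C (f i)) := by
    rw [Multiset.map_map]; rfl
  have hprod2 : ((Finset.univ.val.map g).map fun t => X - C t).prod = ∏ i, (X - C (g i)) := by
    rw [Multiset.map_map]; rfl
  rw [hprod1] at hv1; rw [hprod2] at hv2
  have heq : (Finset.univ.val.map f).esymm k = (Finset.univ.val.map g).esymm k := by
    have h12 : ((-1 : ℝ)) ^ k * (Finset.univ.val.map f).esymm k
        = ((-1 : ℝ)) ^ k * (Finset.univ.val.map g).esymm k := by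
      rw [← hv1, ← hv2, hpoly]
    exact mul_left_cancel₀ (a := ((-1 : ℝ)) ^ k) (by positivity) h12
  rw [Finset.esymm_map_val, Finset.esymm_map_val] at heq
  exact heq

lemma aux_esym_ite {m : ℕ} (i0 : Fin m) (k : ℕ) (hk : 1 ≤ k) (a d : ℝ) :
    esym Finset.univ k (fun i : Fin m => if i = i0 then d else a)
      = ((m-1).choose (k-1) : ℝ) * (d * a ^ (k-1)) + ((m-1).choose k : ℝ) * a ^ k := by
  classical
  rw [esym]
  rw [← Finset.sum_filter_add_sum_filter_not (Finset.univ.powersetCard k) (fun T => i0 ∈ T)]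
  have h1 : ∑ T ∈ (Finset.univ.powersetCard k).filter (fun T => i0 ∈ T),
      ∏ i ∈ T, (if i = i0 then d else a)
      = ((m-1).choose (k-1) : ℝ) * (d * a ^ (k-1)) := by
    have hbij : ∀ T ∈ (Finset.univ.powersetCard k).filter (fun T => i0 ∈ T),
        ∏ i ∈ T, (if i = i0 then d else a) = d * a ^ (k-1) := by
      intro T hT
      rw [Finset.mem_filter, Finset.mem_powersetCard] at hT
      obtain ⟨⟨_, hcard⟩, hi0⟩ := hT
      rw [← Finset.prod_erase_mul _ _ hi0, if_pos rfl, mul_comm]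
      congr 1
      rw [Finset.prod_congr rfl (fun i hi => if_neg (Finset.ne_of_mem_erase hi)),
        Finset.prod_const, Finset.card_erase_of_mem hi0, hcard]
    rw [Finset.sum_congr rfl hbij, Finset.sum_const, nsmul_eq_mul]
    congr 2
    have : (Finset.univ.powersetCard k).filter (fun T => i0 ∈ T)
        = Finset.image (insert i0) ((Finset.univ.erase i0).powersetCard (k-1)) := by
      ext T
      simp only [Finset.mem_filter, Finset.mem_powersetCard, Finset.mem_image]
      constructor
      · rintro ⟨⟨hsub, hcard⟩, hi0⟩
        refine ⟨T.erase i0, ⟨?_, ?_⟩, ?_⟩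
        · intro i hi
          rw [Finset.mem_erase] at hi ⊢
          exact ⟨hi.1, Finset.mem_univ i⟩
        · rw [Finset.card_erase_of_mem hi0, hcard]
        · exact Finset.insert_erase hi0
      · rintro ⟨S, ⟨hsub, hcard⟩, rfl⟩
        have hi0S : i0 ∉ S := fun h => (Finset.mem_erase.mp (hsub h)).1 rfl
        refine ⟨⟨Finset.subset_univ _, ?_⟩, Finset.mem_insert_self _ _⟩
        rw [Finset.card_insert_of_notMem hi0S, hcard]
        omega
    rw [this, Finset.card_image_of_injOn, Finset.card_powersetCard,
      Finset.card_erase_of_mem (Finset.mem_univ i0), Finset.card_univ, Fintype.card_fin]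
    intro S hS S' hS' hSS
    rw [Finset.mem_coe, Finset.mem_powersetCard] at hS hS'
    have hi0S : i0 ∉ S := fun h => (Finset.mem_erase.mp (hS.1 h)).1 rfl
    have hi0S' : i0 ∉ S' := fun h => (Finset.mem_erase.mp (hS'.1 h)).1 rfl
    have := congrArg (Finset.erase · i0) hSS
    simpa [Finset.erase_insert hi0S, Finset.erase_insert hi0S'] using this
  have h2 : ∑ T ∈ (Finset.univ.powersetCard k).filter (fun T => ¬ i0 ∈ T),
      ∏ i ∈ T, (if i = i0 then d else a)
      = ((m-1).choose k : ℝ) * a ^ k := by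
    have hbij : ∀ T ∈ (Finset.univ.powersetCard k).filter (fun T => ¬ i0 ∈ T),
        ∏ i ∈ T, (if i = i0 then d else a) = a ^ k := by
      intro T hT
      rw [Finset.mem_filter, Finset.mem_powersetCard] at hT
      obtain ⟨⟨_, hcard⟩, hi0⟩ := hT
      rw [Finset.prod_congr rfl (fun i hi => if_neg (fun h : i = i0 => hi0 (h ▸ hi))),
        Finset.prod_const, hcard]
    rw [Finset.sum_congr rfl hbij, Finset.sum_const, nsmul_eq_mul]
    congr 2
    have : (Finset.univ.powersetCard k).filter (fun T => ¬ i0 ∈ T)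
        = (Finset.univ.erase i0).powersetCard k := by
      ext T
      simp only [Finset.mem_filter, Finset.mem_powersetCard, Finset.subset_erase]
      constructor
      · rintro ⟨⟨hsub, hcard⟩, hi0⟩
        exact ⟨⟨hsub, hi0⟩, hcard⟩
      · rintro ⟨⟨hsub, hi0⟩, hcard⟩
        exact ⟨⟨hsub, hcard⟩, hi0⟩
    rw [this, Finset.card_powersetCard, Finset.card_erase_of_mem (Finset.mem_univ i0),
      Finset.card_univ, Fintype.card_fin]
  rw [h1, h2]

end aux

section calc1
variable (n k : ℕ) (α : ℝ)

noncomputable def Bf (t : ℝ) : ℝ := 1 + α * t ^ (-(n:ℝ)/2)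
noncomputable def φf (t : ℝ) : ℝ := (Bf n α t) ^ ((1:ℝ)/k)
noncomputable def ψf (t : ℝ) : ℝ :=
  (1:ℝ)/k * (Bf n α t) ^ ((1:ℝ)/k - 1) * (α * (-(n:ℝ)/2) * t ^ (-(n:ℝ)/2 - 1))

variable {n k α}

lemma hBpos (hα : 0 < α) {t : ℝ} (ht : 0 < t) : 0 < Bf n α t := by
  have : 0 < t ^ (-(n:ℝ)/2) := Real.rpow_pos_of_pos ht _
  have : 0 < α * t ^ (-(n:ℝ)/2) := mul_pos hα this
  unfold Bf; linarith

lemma hBderiv {s : ℝ} (hs : 0 < s) :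
    HasDerivAt (Bf n α) (α * (-(n:ℝ)/2 * s ^ (-(n:ℝ)/2 - 1))) s := by
  have h1 : HasDerivAt (fun t : ℝ => t ^ (-(n:ℝ)/2)) (-(n:ℝ)/2 * s ^ (-(n:ℝ)/2 - 1)) s :=
    Real.hasDerivAt_rpow_const (Or.inl hs.ne')
  exact (h1.const_mul α).const_add 1

lemma hφderiv (hα : 0 < α) {s : ℝ} (hs : 0 < s) :
    HasDerivAt (φf n k α) (ψf n k α s) s := by
  have hB := hBpos (n := n) hα hs
  have h1 : HasDerivAt (fun y : ℝ => y ^ ((1:ℝ)/k)) ((1:ℝ)/k * (Bf n α s) ^ ((1:ℝ)/k - 1))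
      (Bf n α s) := Real.hasDerivAt_rpow_const (Or.inl hB.ne')
  have h2 := h1.comp s (hBderiv hs)
  have h3 : (fun y : ℝ => y ^ ((1:ℝ)/k)) ∘ (Bf n α) = φf n k α := by
    ext t; simp [φf, Function.comp]
  rw [h3] at h2
  exact h2.congr_deriv (by simp only [ψf]; ring)

lemma hφcont (hα : 0 < α) {t : ℝ} (ht : 0 < t) : ContinuousAt (φf n k α) t := by
  have h1 : ContinuousAt (Bf n α) t := by
    have : ContinuousAt (fun t : ℝ => t ^ (-(n:ℝ)/2)) t :=
      Real.continuousAt_rpow_const t _ (Or.inl ht.ne')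
    exact continuousAt_const.add (continuousAt_const.mul this)
  exact (h1.rpow_const (Or.inl (hBpos hα ht).ne'))

end calc1

section calc2
variable {n k : ℕ} {α : ℝ}

lemma hφcontOn (hα : 0 < α) : ContinuousOn (φf n k α) (Set.Ioi 0) :=
  fun _ ht => (hφcont hα ht).continuousWithinAt

lemma hωHasDeriv (hα : 0 < α) (ω : ℝ → ℝ)
    (hω : ∀ s, ω s = ∫ t in (1:ℝ)..s, φf n k α t) {s : ℝ} (hs : 0 < s) :
    HasDerivAt ω (φf n k α s) s := by
  have hωeq : ω = fun s => ∫ t in (1:ℝ)..s, φf n k α t := funext hω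
  rw [hωeq]
  have hsub : Set.uIcc (1:ℝ) s ⊆ Set.Ioi 0 := by
    intro t ht
    rw [Set.mem_uIcc] at ht
    rcases ht with ⟨h1, _⟩ | ⟨h1, _⟩ <;> simp only [Set.mem_Ioi] <;> linarith
  exact intervalIntegral.integral_hasDerivAt_right
    (((hφcontOn hα).mono hsub).intervalIntegrable)
    (ContinuousAt.stronglyMeasurableAtFilter isOpen_Ioi (fun _ ht => hφcont hα ht) s hs)
    (hφcont hα hs)

lemma hωderiv1 (hα : 0 < α) (ω : ℝ → ℝ)
    (hω : ∀ s, ω s = ∫ t in (1:ℝ)..s, φf n k α t) {s : ℝ} (hs : 0 < s) :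
    deriv ω s = φf n k α s := (hωHasDeriv hα ω hω hs).deriv

lemma hωderiv2 (hα : 0 < α) (ω : ℝ → ℝ)
    (hω : ∀ s, ω s = ∫ t in (1:ℝ)..s, φf n k α t) {s : ℝ} (hs : 0 < s) :
    deriv (deriv ω) s = ψf n k α s := by
  have hev : deriv ω =ᶠ[nhds s] φf n k α := by
    filter_upwards [Ioi_mem_nhds hs] with t ht
    exact hωderiv1 hα ω hω ht
  rw [hev.deriv_eq]
  exact (hφderiv hα hs).deriv

lemma ode_key (hn : 3 ≤ n) (hk : 2 ≤ k) (hα : 0 < α) {s : ℝ} (hs : 0 < s) :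
    (φf n k α s) ^ k + 2 * (k:ℝ) * s / n * ψf n k α s * (φf n k α s) ^ (k - 1) = 1 := by
  have hB := hBpos (n := n) hα hs
  have hk0 : (k:ℝ) ≠ 0 := by positivity
  have hn0 : (n:ℝ) ≠ 0 := by positivity
  set e : ℝ := -(n:ℝ)/2 with he
  set B : ℝ := Bf n α s with hBdef
  have h1 : (φf n k α s) ^ k = B := by
    rw [φf, ← Real.rpow_natCast (B ^ ((1:ℝ)/k)) k, ← Real.rpow_mul hB.le]
    rw [one_div, inv_mul_cancel₀ hk0, Real.rpow_one]
  have h2 : (φf n k α s) ^ (k - 1) = B ^ (((k:ℝ) - 1)/k) := by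
    rw [φf, ← Real.rpow_natCast (B ^ ((1:ℝ)/k)) (k-1), ← Real.rpow_mul hB.le]
    congr 1
    rw [Nat.cast_sub (by omega)]
    push_cast
    field_simp
  have h3 : B ^ ((1:ℝ)/k - 1) * B ^ (((k:ℝ) - 1)/k) = 1 := by
    rw [← Real.rpow_add hB]
    have : (1:ℝ)/k - 1 + ((k:ℝ) - 1)/k = 0 := by field_simp; ring
    rw [this, Real.rpow_zero]
  have h4 : s * s ^ (e - 1) = s ^ e := by
    rw [Real.rpow_sub hs, Real.rpow_one]
    field_simp
  rw [h1, h2, ψf]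
  rw [show (1:ℝ)/k * B ^ ((1:ℝ)/k - 1) * (α * e * s ^ (e-1)) = α * e * ((1:ℝ)/k) * s^(e-1) * B ^ ((1:ℝ)/k - 1) by ring]
  rw [show 2 * (k:ℝ) * s / n * (α * e * ((1:ℝ)/k) * s^(e-1) * B ^ ((1:ℝ)/k - 1)) * B ^ (((k:ℝ) - 1)/k)
      = (2 * (k:ℝ) / n * ((1:ℝ)/k) * α * e) * (s * s^(e-1)) * (B ^ ((1:ℝ)/k - 1) * B ^ (((k:ℝ) - 1)/k)) by ring]
  rw [h3, h4, mul_one]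
  have h5 : 2 * (k:ℝ) / n * ((1:ℝ)/k) * α * e = -α := by
    rw [he]; field_simp
  rw [h5, hBdef, Bf]
  ring
end calc2

section hessian
variable {n k : ℕ} {α c : ℝ}

noncomputable def projL (n : ℕ) (i : Fin n) : (Fin n → ℝ) →L[ℝ] ℝ :=
  ContinuousLinearMap.proj i

lemma projL_apply (n : ℕ) (i : Fin n) (v : Fin n → ℝ) : projL n i v = v i := rfl

noncomputable def Dg (c : ℝ) (y : Fin n → ℝ) : (Fin n → ℝ) →L[ℝ] ℝ :=
  ∑ i, (c * y i) • projL n i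

lemma Dg_apply (c : ℝ) (y v : Fin n → ℝ) : Dg c y v = ∑ i, (c * y i) * v i := by
  simp [Dg, projL]

lemma Dg_single (c : ℝ) (y : Fin n → ℝ) (j : Fin n) :
    Dg c y (Pi.single j 1) = c * y j := by
  rw [Dg_apply]
  rw [Finset.sum_eq_single j]
  · simp
  · intro i _ hij; simp [Pi.single_apply, hij.symm]
  · simp

lemma hg_fderiv (c : ℝ) (y : Fin n → ℝ) :
    HasFDerivAt (fun y : Fin n → ℝ => c/2 * ∑ i, y i ^ 2) (Dg c y) y := by
  have hi : ∀ i : Fin n, HasFDerivAt (fun y : Fin n → ℝ => y i ^ 2)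
      ((2 * y i) • projL n i) y := by
    intro i
    have h := (projL n i).hasFDerivAt (x := y)
    have hm := h.fun_mul h
    have e1 : (fun y : Fin n → ℝ => y i ^ 2) = fun z => projL n i z * projL n i z := by
      funext z
      simp only [projL_apply, sq]
    have e2 : (2 * y i) • projL n i = projL n i y • projL n i + projL n i y • projL n i := by
      rw [two_mul, add_smul]
      rfl
    rw [e1, e2]
    exact hm
  have hsum := HasFDerivAt.fun_sum (fun i (_ : i ∈ Finset.univ) => hi i)
  have := hsum.const_mul (c/2)
  have e : Dg c y = (c/2) • ∑ i ∈ Finset.univ, (2 * y i) • projL n i := by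
    rw [Dg, Finset.smul_sum]
    congr 1
    ext i v
    simp
    ring
  rw [e]
  exact this

variable (hc : 0 < c) (hα : 0 < α)

lemma sum_sq_pos {x : Fin n → ℝ} (hx : x ≠ 0) : 0 < ∑ i, x i ^ 2 := by
  obtain ⟨i, hi⟩ := Function.ne_iff.mp hx
  exact Finset.sum_pos' (fun j _ => sq_nonneg _)
    ⟨i, Finset.mem_univ i, lt_of_le_of_ne (sq_nonneg _) (Ne.symm (pow_ne_zero 2 hi))⟩

include hc hα in
lemma hess_eq (u : (Fin n → ℝ) → ℝ) (ω : ℝ → ℝ)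
    (hω : ∀ s, ω s = ∫ t in (1:ℝ)..s, φf n k α t)
    (hu : ∀ y, u y = ω (c / 2 * ∑ i, y i ^ 2))
    (x : Fin n → ℝ) (hx : x ≠ 0) :
    hess u x = (c * φf n k α (c/2 * ∑ i, x i ^ 2)) • (1 : Matrix (Fin n) (Fin n) ℝ)
      + (c^2 * ψf n k α (c/2 * ∑ i, x i ^ 2)) • vecMulVec x x := by
  have hueq : u = fun y => ω (c/2 * ∑ i, y i ^ 2) := funext hu
  set g : (Fin n → ℝ) → ℝ := fun y => c/2 * ∑ i, y i ^ 2 with hgdef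
  have hgpos : ∀ y : Fin n → ℝ, y ≠ 0 → 0 < g y := by
    intro y hy
    have := sum_sq_pos hy
    rw [hgdef]
    have h2 : 0 < c/2 := by linarith
    exact mul_pos h2 this
  have hufd : ∀ y : Fin n → ℝ, y ≠ 0 →
      HasFDerivAt u ((φf n k α (g y)) • Dg c y) y := by
    intro y hy
    rw [hueq]
    exact (hωHasDeriv hα ω hω (hgpos y hy)).comp_hasFDerivAt y (hg_fderiv c y)
  have hopen : IsOpen {y : Fin n → ℝ | y ≠ 0} := isOpen_compl_singleton
  have hxmem : x ∈ {y : Fin n → ℝ | y ≠ 0} := hx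
  ext i j
  show fderiv ℝ (fun y => fderiv ℝ u y (Pi.single j 1)) x (Pi.single i 1) = _
  have hev : (fun y => fderiv ℝ u y (Pi.single j 1))
      =ᶠ[nhds x] (fun y => φf n k α (g y) * (c * y j)) := by
    filter_upwards [hopen.mem_nhds hxmem] with y hy
    rw [(hufd y hy).fderiv]
    simp [Dg_single]
  rw [hev.fderiv_eq]
  have h1 : HasFDerivAt (fun y => φf n k α (g y)) ((ψf n k α (g x)) • Dg c x) x :=
    (hφderiv hα (hgpos x hx)).comp_hasFDerivAt x (hg_fderiv c x)
  have h2 : HasFDerivAt (fun y : Fin n → ℝ => c * y j)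
      (c • projL n j) x := by
    have h := (projL n j).hasFDerivAt (x := x)
    exact h.const_mul c
  have h3 := h1.fun_mul h2
  rw [h3.fderiv]
  simp only [ContinuousLinearMap.add_apply, ContinuousLinearMap.smul_apply,
    projL_apply, Dg_single, Matrix.add_apply, Matrix.smul_apply,
    Matrix.one_apply, vecMulVec_apply, smul_eq_mul]
  rw [Pi.single_apply]
  rcases eq_or_ne i j with h | h
  · subst h; simp; ring
  · simp [h, Ne.symm h]
    ring
end hessian

/-- In the radially symmetric case `a₁ = ⋯ = aₙ = c` with `σ_k(a) = 1`, one has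
`c = (n choose k)^{-1/k}`; the function `ω̄_k(s) = ∫₁ˢ (1 + α t^{-n/2})^{1/k} dt` solves
`(ω')^k + (2ks/n) ω'' (ω')^{k-1} = 1` on `(0,∞)`, and `u(x) = ω̄_k(c|x|²/2)` satisfies
`σ_k(λ(D²u)) = 1` in `ℝⁿ \ {0}`. -/
theorem stmt_19 (n k : ℕ) (hn : 3 ≤ n) (hk : 2 ≤ k) (hkn : k ≤ n - 1)
    (c : ℝ) (hc : 0 < c) (hsk : esym Finset.univ k (fun _ : Fin n => c) = 1)
    (α : ℝ) (hα : 0 < α)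
    (ω : ℝ → ℝ)
    (hω : ∀ s, ω s = ∫ t in (1 : ℝ)..s, (1 + α * t ^ (-(n : ℝ) / 2)) ^ ((1 : ℝ) / k))
    (u : (Fin n → ℝ) → ℝ)
    (hu : ∀ x, u x = ω (c / 2 * ∑ i, x i ^ 2)) :
    c = ((n.choose k : ℝ)) ^ (-(1 : ℝ) / k) ∧
    (∀ s > (0 : ℝ),
      (deriv ω s) ^ k
        + 2 * (k : ℝ) * s / n * deriv (deriv ω) s * (deriv ω s) ^ (k - 1) = 1) ∧
    (∀ x : Fin n → ℝ, x ≠ 0 →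
      ∀ hM : (hess u x).IsHermitian, esym Finset.univ k hM.eigenvalues = 1) := by
  have hω' : ∀ s, ω s = ∫ t in (1:ℝ)..s, φf n k α t := fun s => by rw [hω s]; rfl
  have hk0 : (k:ℝ) ≠ 0 := by positivity
  have hn0 : (n:ℝ) ≠ 0 := by positivity
  -- compute hsk
  have hsk' : (n.choose k : ℝ) * c ^ k = 1 := by
    rw [esym] at hsk
    have hconst : ∀ T ∈ (Finset.univ : Finset (Fin n)).powersetCard k,
        (∏ _i ∈ T, c) = c ^ k := by
      intro T hT
      rw [Finset.prod_const, (Finset.mem_powersetCard.mp hT).2]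
    rw [Finset.sum_congr rfl hconst, Finset.sum_const, nsmul_eq_mul,
      Finset.card_powersetCard, Finset.card_univ, Fintype.card_fin] at hsk
    exact hsk
  have hCpos : (0:ℝ) < (n.choose k : ℝ) :=
    Nat.cast_pos.mpr (Nat.choose_pos (by omega))
  refine ⟨?_, ?_, ?_⟩
  · -- part 1
    have hck : c ^ k = ((n.choose k : ℝ))⁻¹ := eq_inv_of_mul_eq_one_left (by
      rw [mul_comm] at hsk'; exact hsk')
    have h1 : c = ((c ^ k : ℝ)) ^ ((1:ℝ)/k) := by
      rw [← Real.rpow_natCast c k, ← Real.rpow_mul hc.le, mul_one_div, div_self hk0,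
        Real.rpow_one]
    rw [h1, hck, ← Real.rpow_neg_one ((n.choose k : ℝ)), ← Real.rpow_mul hCpos.le]
    congr 1
    ring
  · -- part 2
    intro s hs
    rw [hωderiv1 hα ω hω' hs, hωderiv2 hα ω hω' hs]
    exact ode_key hn hk hα hs
  · -- part 3
    intro x hx hM
    set S : ℝ := ∑ i, x i ^ 2 with hSdef
    have hSpos : 0 < S := sum_sq_pos hx
    set s₀ : ℝ := c/2 * S with hs₀def
    have hs₀pos : 0 < s₀ := by
      have : 0 < c/2 := by linarith
      exact mul_pos this hSpos
    set p : ℝ := φf n k α s₀ with hpdef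
    set q : ℝ := ψf n k α s₀ with hqdef
    set a : ℝ := c * p with hadef
    set b : ℝ := c^2 * q with hbdef
    set d : ℝ := a + b * S with hddef
    have hhess : hess u x = a • (1 : Matrix (Fin n) (Fin n) ℝ) + b • vecMulVec x x :=
      hess_eq hc hα u ω hω' hu x hx
    set i0 : Fin n := ⟨0, by omega⟩ with hi0def
    set g : Fin n → ℝ := fun i => if i = i0 then d else a with hgdef
    have hroots : ∀ t : ℝ, ∏ i, (t - hM.eigenvalues i) = ∏ i, (t - g i) := by
      intro t
      rw [← aux_eig _ hM t]
      have hmat : t • (1 : Matrix (Fin n) (Fin n) ℝ) - hess u x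
          = (t - a) • (1 : Matrix (Fin n) (Fin n) ℝ) + (-b) • vecMulVec x x := by
        rw [hhess]
        ext i j
        simp only [Matrix.sub_apply, Matrix.add_apply, Matrix.smul_apply, smul_eq_mul]
        ring
      rw [hmat, aux_det n (by omega) (t - a) (-b) x]
      have hprodg : ∏ i, (t - g i) = (t - a) ^ (n - 1) * (t - d) := by
        rw [← Finset.prod_erase_mul _ _ (Finset.mem_univ i0)]
        rw [hgdef]
        simp only [if_pos rfl]
        congr 1
        rw [Finset.prod_congr rfl
          (fun i hi => by rw [if_neg (Finset.ne_of_mem_erase hi)]),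
          Finset.prod_const, Finset.card_erase_of_mem (Finset.mem_univ i0),
          Finset.card_univ, Fintype.card_fin]
      rw [hprodg, ← hSdef]
      rw [hddef]
      ring
    have hesym : esym Finset.univ k hM.eigenvalues = esym Finset.univ k g :=
      aux_vieta _ _ hroots k (by omega)
    rw [hesym, hgdef]
    rw [aux_esym_ite i0 k (by omega) a d]
    -- final algebra
    set X : ℝ := c ^ (k - 1) with hXdef
    set Y : ℝ := p ^ (k - 1) with hYdef
    have hk1 : k - 1 + 1 = k := by omega
    have haX : a ^ (k - 1) = X * Y := by rw [hadef, mul_pow]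
    have haK : a ^ k = (c * p) * (X * Y) := by
      rw [← hk1, pow_succ, mul_pow, hadef]
      ring
    have hcK : c ^ k = c * X := by
      rw [← hk1, pow_succ]
      ring
    have hode : p ^ k + 2 * (k:ℝ) * s₀ / n * q * p ^ (k - 1) = 1 := ode_key hn hk hα hs₀pos
    have hpK : p ^ k = p * Y := by rw [← hk1, pow_succ]; ring
    rw [hpK] at hode
    have h2div : (n:ℝ) * (2 * (k:ℝ) * s₀ / n) = k * c * S := by
      field_simp [hs₀def]
      ring
    have hode' : (n:ℝ) * (p * Y) + (k:ℝ) * c * S * (q * Y) = n := by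
      linear_combination (n:ℝ) * hode - q * Y * h2div
    have hsk2 : (n.choose k : ℝ) * (c * X) = 1 := by rw [← hcK]; exact hsk'
    have hpas : ((n-1).choose (k-1) : ℝ) + ((n-1).choose k : ℝ) = (n.choose k : ℝ) := by
      have h := Nat.choose_succ_succ (n-1) (k-1)
      simp only [Nat.succ_eq_add_one] at h
      have hn1 : n - 1 + 1 = n := by omega
      have hk1' : k - 1 + 1 = k := by omega
      rw [hn1, hk1'] at h
      rw [h]
      push_cast
      ring
    have hid4 : (n:ℝ) * ((n-1).choose (k-1) : ℝ) = (k:ℝ) * (n.choose k : ℝ) := by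
      have h := Nat.add_one_mul_choose_eq (n-1) (k-1)
      have hn1 : n - 1 + 1 = n := by omega
      have hk1' : k - 1 + 1 = k := by omega
      rw [hn1, hk1'] at h
      have h2 := congrArg (Nat.cast : ℕ → ℝ) h
      push_cast at h2
      linarith
    have hmain : (n:ℝ) * (((n-1).choose (k-1) : ℝ) * (d * a ^ (k-1))
        + ((n-1).choose k : ℝ) * a ^ k) = (n:ℝ) * 1 := by
      rw [haX, haK, hddef, hadef, hbdef]
      linear_combination ((n.choose k : ℝ) * c * X) * hode'
        + ((n:ℝ) * c * p * X * Y) * hpas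
        + (c^2 * q * S * X * Y) * hid4
        + (n:ℝ) * hsk2
    exact mul_left_cancel₀ hn0 hmain
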